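/- There is no homeomorphism h : X₁ → X₂ satisfying h ∘ σ₁ = σ₂ ∘ h. -/
import Mathlib


open OnePoint

/-- Complex conjugation extended to the Riemann sphere `OnePoint ℂ`, fixing `∞`. -/
noncomputable def conjSphere : OnePoint ℂ → OnePoint ℂ := OnePoint.map (starRingEnd ℂ)

/-- Identifications `i ∼ 2i` and `−i ∼ −2i` on the Riemann sphere `OnePoint ℂ`. -/
def relEx2₁ : OnePoint ℂ → OnePoint ℂ → Prop := fun a b =>
  (a = (Complex.I : OnePoint ℂ) ∧ b = ((2 * Complex.I : ℂ) : OnePoint ℂ)) ∨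
  (a = ((-Complex.I : ℂ) : OnePoint ℂ) ∧ b = ((-(2 * Complex.I) : ℂ) : OnePoint ℂ))

/-- Identifications `i ∼ −2i` and `−i ∼ 2i` on the Riemann sphere `OnePoint ℂ`. -/
def relEx2₂ : OnePoint ℂ → OnePoint ℂ → Prop := fun a b =>
  (a = (Complex.I : OnePoint ℂ) ∧ b = ((-(2 * Complex.I) : ℂ) : OnePoint ℂ)) ∨
  (a = ((-Complex.I : ℂ) : OnePoint ℂ) ∧ b = ((2 * Complex.I : ℂ) : OnePoint ℂ))

/-- Structure of the equivalence closure of `relEx2₁`. -/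
lemma eqvGen₁ {a b : OnePoint ℂ} (h : Relation.EqvGen relEx2₁ a b) :
    a = b ∨ (a = (Complex.I : OnePoint ℂ) ∧ b = ((2*Complex.I : ℂ) : OnePoint ℂ)) ∨
    (b = (Complex.I : OnePoint ℂ) ∧ a = ((2*Complex.I : ℂ) : OnePoint ℂ)) ∨
    (a = ((-Complex.I : ℂ) : OnePoint ℂ) ∧ b = ((-(2*Complex.I) : ℂ) : OnePoint ℂ)) ∨
    (b = ((-Complex.I : ℂ) : OnePoint ℂ) ∧ a = ((-(2*Complex.I) : ℂ) : OnePoint ℂ)) := by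
  induction h with
  | rel x y hxy => rcases hxy with ⟨h1,h2⟩|⟨h1,h2⟩ <;> tauto
  | refl x => tauto
  | symm x y _ ih => tauto
  | trans x y z _ _ ih1 ih2 =>
      rcases ih1 with h|⟨h1,h2⟩|⟨h1,h2⟩|⟨h1,h2⟩|⟨h1,h2⟩ <;>
      rcases ih2 with g|⟨g1,g2⟩|⟨g1,g2⟩|⟨g1,g2⟩|⟨g1,g2⟩ <;>
      subst_vars <;> first | tauto | (norm_num [OnePoint.coe_eq_coe, Complex.ext_iff] at *)

/-- Structure of the equivalence closure of `relEx2₂`. -/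
lemma eqvGen₂ {a b : OnePoint ℂ} (h : Relation.EqvGen relEx2₂ a b) :
    a = b ∨ (a = (Complex.I : OnePoint ℂ) ∧ b = ((-(2*Complex.I) : ℂ) : OnePoint ℂ)) ∨
    (b = (Complex.I : OnePoint ℂ) ∧ a = ((-(2*Complex.I) : ℂ) : OnePoint ℂ)) ∨
    (a = ((-Complex.I : ℂ) : OnePoint ℂ) ∧ b = ((2*Complex.I : ℂ) : OnePoint ℂ)) ∨
    (b = ((-Complex.I : ℂ) : OnePoint ℂ) ∧ a = ((2*Complex.I : ℂ) : OnePoint ℂ)) := by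
  induction h with
  | rel x y hxy => rcases hxy with ⟨h1,h2⟩|⟨h1,h2⟩ <;> tauto
  | refl x => tauto
  | symm x y _ ih => tauto
  | trans x y z _ _ ih1 ih2 =>
      rcases ih1 with h|⟨h1,h2⟩|⟨h1,h2⟩|⟨h1,h2⟩|⟨h1,h2⟩ <;>
      rcases ih2 with g|⟨g1,g2⟩|⟨g1,g2⟩|⟨g1,g2⟩|⟨g1,g2⟩ <;>
      subst_vars <;> first | tauto | (norm_num [OnePoint.coe_eq_coe, Complex.ext_iff] at *)

/-- The sign of the imaginary part is invariant along classes of `relEx2₁`. -/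
lemma sign₁ {z w : ℂ} (h : Quot.mk relEx2₁ (z : OnePoint ℂ) = Quot.mk relEx2₁ (w : OnePoint ℂ))
    (hz : 0 < z.im) : 0 < w.im := by
  have := eqvGen₁ (Quot.eq.mp h)
  rcases this with h|⟨h1,h2⟩|⟨h1,h2⟩|⟨h1,h2⟩|⟨h1,h2⟩ <;>
    simp_all [OnePoint.coe_eq_coe] <;> subst_vars <;> norm_num at *

lemma sign₁' {z w : ℂ} (h : Quot.mk relEx2₁ (z : OnePoint ℂ) = Quot.mk relEx2₁ (w : OnePoint ℂ))
    (hz : z.im < 0) : w.im < 0 := by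
  have := eqvGen₁ (Quot.eq.mp h)
  rcases this with h|⟨h1,h2⟩|⟨h1,h2⟩|⟨h1,h2⟩|⟨h1,h2⟩ <;>
    simp_all [OnePoint.coe_eq_coe] <;> subst_vars <;> norm_num at *

lemma nreal₁ {z w : ℂ} (h : Quot.mk relEx2₁ (z : OnePoint ℂ) = Quot.mk relEx2₁ (w : OnePoint ℂ))
    (hz : z.im ≠ 0) : w.im ≠ 0 := by
  have := eqvGen₁ (Quot.eq.mp h)
  rcases this with h|⟨h1,h2⟩|⟨h1,h2⟩|⟨h1,h2⟩|⟨h1,h2⟩ <;>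
    simp_all [OnePoint.coe_eq_coe] <;> subst_vars <;> norm_num at *

/-- The class of `∞` contains no finite point, for `relEx2₁`. -/
lemma infty₁ {z : ℂ} : Quot.mk relEx2₁ (z : OnePoint ℂ) ≠ Quot.mk relEx2₁ (∞ : OnePoint ℂ) := by
  intro h
  have := eqvGen₁ (Quot.eq.mp h)
  simp_all [OnePoint.coe_ne_infty, OnePoint.infty_ne_coe]

lemma infty₂ {z : ℂ} : Quot.mk relEx2₂ (z : OnePoint ℂ) ≠ Quot.mk relEx2₂ (∞ : OnePoint ℂ) := by
  intro h
  have := eqvGen₂ (Quot.eq.mp h)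
  simp_all [OnePoint.coe_ne_infty, OnePoint.infty_ne_coe]

/-- `im ≠ 0` is invariant along classes of `relEx2₂`. -/
lemma nreal₂ {z w : ℂ} (h : Quot.mk relEx2₂ (z : OnePoint ℂ) = Quot.mk relEx2₂ (w : OnePoint ℂ))
    (hz : z.im ≠ 0) : w.im ≠ 0 := by
  have := eqvGen₂ (Quot.eq.mp h)
  rcases this with h|⟨h1,h2⟩|⟨h1,h2⟩|⟨h1,h2⟩|⟨h1,h2⟩ <;>
    simp_all [OnePoint.coe_eq_coe] <;> subst_vars <;> norm_num at *

/-- Nonreal points are not fixed in `X₁`. -/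
lemma nfix₁ {z : ℂ} (hz : z.im ≠ 0) :
    Quot.mk relEx2₁ ((starRingEnd ℂ z : ℂ) : OnePoint ℂ) ≠ Quot.mk relEx2₁ (z : OnePoint ℂ) := by
  intro h
  have := eqvGen₁ (Quot.eq.mp h)
  rcases this with h|⟨h1,h2⟩|⟨h1,h2⟩|⟨h1,h2⟩|⟨h1,h2⟩
  · rw [OnePoint.coe_eq_coe] at h
    exact hz (Complex.conj_eq_iff_im.mp h)
  all_goals
    rw [OnePoint.coe_eq_coe] at h1 h2
  all_goals
    first
      | (subst h2; norm_num [Complex.ext_iff] at h1)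
      | (subst h1; norm_num [Complex.ext_iff] at h2)

/-- Nonreal points are not fixed in `X₂`. -/
lemma nfix₂ {z : ℂ} (hz : z.im ≠ 0) :
    Quot.mk relEx2₂ ((starRingEnd ℂ z : ℂ) : OnePoint ℂ) ≠ Quot.mk relEx2₂ (z : OnePoint ℂ) := by
  intro h
  have := eqvGen₂ (Quot.eq.mp h)
  rcases this with h|⟨h1,h2⟩|⟨h1,h2⟩|⟨h1,h2⟩|⟨h1,h2⟩
  · rw [OnePoint.coe_eq_coe] at h
    exact hz (Complex.conj_eq_iff_im.mp h)
  all_goals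
    rw [OnePoint.coe_eq_coe] at h1 h2
  all_goals
    first
      | (subst h2; norm_num [Complex.ext_iff] at h1)
      | (subst h1; norm_num [Complex.ext_iff] at h2)

lemma conjSphere_infty : conjSphere (∞ : OnePoint ℂ) = ∞ := rfl

lemma conjSphere_coe (z : ℂ) :
    conjSphere (z : OnePoint ℂ) = ((starRingEnd ℂ z : ℂ) : OnePoint ℂ) := rfl

/-- if `σ₁`, `σ₂` are the involutions of `X₁ = Quot relEx2₁`,
`X₂ = Quot relEx2₂` induced by conjugation, then there is no homeomorphism
`h : X₁ → X₂` with `h ∘ σ₁ = σ₂ ∘ h`. -/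
theorem double_cover_statement_12
    (σ₁ : Quot relEx2₁ → Quot relEx2₁) (σ₂ : Quot relEx2₂ → Quot relEx2₂)
    (hσ₁ : ∀ a : OnePoint ℂ, σ₁ (Quot.mk relEx2₁ a) = Quot.mk relEx2₁ (conjSphere a))
    (hσ₂ : ∀ a : OnePoint ℂ, σ₂ (Quot.mk relEx2₂ a) = Quot.mk relEx2₂ (conjSphere a)) :
    ¬ ∃ h : Quot relEx2₁ ≃ₜ Quot relEx2₂, ∀ x : Quot relEx2₁, h (σ₁ x) = σ₂ (h x) := by
  rintro ⟨h, hc⟩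
  set C₁ : Set (Quot relEx2₁) := {x | σ₁ x ≠ x} with hC₁def
  set C₂ : Set (Quot relEx2₂) := {x | σ₂ x ≠ x} with hC₂def
  -- description of the non-fixed sets as images of the nonreal points
  have hC₂ : C₂ = (fun z : ℂ => Quot.mk relEx2₂ (z : OnePoint ℂ)) '' {z : ℂ | z.im ≠ 0} := by
    ext x
    induction x using Quot.ind with | _ a => ?_
    induction a using OnePoint.rec with
    | infty =>
        simp only [hC₂def, Set.mem_setOf_eq, hσ₂, conjSphere_infty, Set.mem_image]
        constructor
        · intro hne; exact absurd rfl hne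
        · rintro ⟨z, _, hzx⟩; exact absurd hzx infty₂
    | coe z =>
        simp only [hC₂def, Set.mem_setOf_eq, hσ₂, conjSphere_coe, Set.mem_image]
        constructor
        · intro hne
          refine ⟨z, fun h0 => hne ?_, rfl⟩
          rw [Complex.conj_eq_iff_im.mpr h0]
        · rintro ⟨w, hw, hwx⟩
          exact nfix₂ (nreal₂ hwx hw)
  have hC₁ : C₁ = (fun z : ℂ => Quot.mk relEx2₁ (z : OnePoint ℂ)) '' {z : ℂ | z.im ≠ 0} := by
    ext x
    induction x using Quot.ind with | _ a => ?_
    induction a using OnePoint.rec with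
    | infty =>
        simp only [hC₁def, Set.mem_setOf_eq, hσ₁, conjSphere_infty, Set.mem_image]
        constructor
        · intro hne; exact absurd rfl hne
        · rintro ⟨z, _, hzx⟩; exact absurd hzx infty₁
    | coe z =>
        simp only [hC₁def, Set.mem_setOf_eq, hσ₁, conjSphere_coe, Set.mem_image]
        constructor
        · intro hne
          refine ⟨z, fun h0 => hne ?_, rfl⟩
          rw [Complex.conj_eq_iff_im.mpr h0]
        · rintro ⟨w, hw, hwx⟩
          exact nfix₁ (nreal₁ hwx hw)
  -- C₂ is preconnected
  have cont₂ : Continuous (fun z : ℂ => Quot.mk relEx2₂ (z : OnePoint ℂ)) :=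
    continuous_quot_mk.comp OnePoint.continuous_coe
  have hconn : IsPreconnected C₂ := by
    rw [hC₂]
    have him : {z : ℂ | z.im ≠ 0} = {z : ℂ | 0 < z.im} ∪ {z : ℂ | z.im < 0} := by
      ext z
      simp only [Set.mem_setOf_eq, Set.mem_union]
      constructor
      · intro hz; rcases hz.lt_or_gt with h'|h'
        · right; exact h'
        · left; exact h'
      · rintro (h'|h') <;> intro h0 <;> rw [h0] at h' <;> exact lt_irrefl 0 h'
    rw [him, Set.image_union]
    have hu : IsPreconnected
        ((fun z : ℂ => Quot.mk relEx2₂ (z : OnePoint ℂ)) '' {z : ℂ | 0 < z.im}) :=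
      ((convex_halfSpace_im_gt 0).isPreconnected).image _ cont₂.continuousOn
    have hl : IsPreconnected
        ((fun z : ℂ => Quot.mk relEx2₂ (z : OnePoint ℂ)) '' {z : ℂ | z.im < 0}) :=
      ((convex_halfSpace_im_lt 0).isPreconnected).image _ cont₂.continuousOn
    have hnode : Quot.mk relEx2₂ (((-(2*Complex.I)) : ℂ) : OnePoint ℂ) =
        Quot.mk relEx2₂ ((Complex.I : ℂ) : OnePoint ℂ) :=
      (Quot.sound (show relEx2₂ ((Complex.I : ℂ) : OnePoint ℂ)
        (((-(2*Complex.I)) : ℂ) : OnePoint ℂ) from Or.inl ⟨rfl, rfl⟩)).symm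
    refine IsPreconnected.union (Quot.mk relEx2₂ (Complex.I : OnePoint ℂ)) ?_ ?_ hu hl
    · refine ⟨Complex.I, ?_, rfl⟩
      simp
    · refine ⟨-(2*Complex.I), ?_, hnode⟩
      simp
  -- C₁ is the preimage of C₂ under h, hence preconnected
  have hpre : C₁ = ⇑h ⁻¹' C₂ := by
    ext x
    simp only [hC₁def, hC₂def, Set.mem_setOf_eq, Set.mem_preimage, ← hc x]
    exact not_congr (EmbeddingLike.apply_eq_iff_eq h).symm
  have hC₁pc : IsPreconnected C₁ := by
    have himg : ⇑h ⁻¹' C₂ = ⇑h.symm '' C₂ := by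
      ext y
      constructor
      · intro hy; exact ⟨h y, hy, h.symm_apply_apply y⟩
      · rintro ⟨c, hcC, rfl⟩
        simpa [h.apply_symm_apply] using hcC
    rw [hpre, himg]
    exact hconn.image _ h.symm.continuous.continuousOn
  -- but C₁ is disconnected
  set U : Set (Quot relEx2₁) :=
    {x | ∃ z : ℂ, 0 < z.im ∧ Quot.mk relEx2₁ (z : OnePoint ℂ) = x} with hUdef
  set V : Set (Quot relEx2₁) :=
    {x | ∃ z : ℂ, z.im < 0 ∧ Quot.mk relEx2₁ (z : OnePoint ℂ) = x} with hVdef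
  have hUopen : IsOpen U := by
    rw [← isQuotientMap_quot_mk.isOpen_preimage]
    have : Quot.mk relEx2₁ ⁻¹' U = (fun z : ℂ => (z : OnePoint ℂ)) '' {z : ℂ | 0 < z.im} := by
      ext a
      simp only [Set.mem_preimage, hUdef, Set.mem_setOf_eq, Set.mem_image]
      constructor
      · rintro ⟨z, hz, hza⟩
        induction a using OnePoint.rec with
        | infty => exact absurd hza infty₁
        | coe w => exact ⟨w, sign₁ hza hz, rfl⟩
      · rintro ⟨z, hz, rfl⟩
        exact ⟨z, hz, rfl⟩
    rw [this]
    exact OnePoint.isOpenEmbedding_coe.isOpenMap _ (isOpen_lt continuous_const Complex.continuous_im)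
  have hVopen : IsOpen V := by
    rw [← isQuotientMap_quot_mk.isOpen_preimage]
    have : Quot.mk relEx2₁ ⁻¹' V = (fun z : ℂ => (z : OnePoint ℂ)) '' {z : ℂ | z.im < 0} := by
      ext a
      simp only [Set.mem_preimage, hVdef, Set.mem_setOf_eq, Set.mem_image]
      constructor
      · rintro ⟨z, hz, hza⟩
        induction a using OnePoint.rec with
        | infty => exact absurd hza infty₁
        | coe w => exact ⟨w, sign₁' hza hz, rfl⟩
      · rintro ⟨z, hz, rfl⟩
        exact ⟨z, hz, rfl⟩
    rw [this]
    exact OnePoint.isOpenEmbedding_coe.isOpenMap _ (isOpen_lt Complex.continuous_im continuous_const)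
  have hcover : C₁ ⊆ U ∪ V := by
    rw [hC₁]
    rintro x ⟨z, hz, rfl⟩
    have hz' : z.im ≠ 0 := hz
    rcases hz'.lt_or_gt with h'|h'
    · right; exact ⟨z, h', rfl⟩
    · left; exact ⟨z, h', rfl⟩
  have hmemU : (C₁ ∩ U).Nonempty := by
    refine ⟨Quot.mk relEx2₁ (Complex.I : OnePoint ℂ), ?_, ⟨Complex.I, by simp, rfl⟩⟩
    rw [hC₁]; exact ⟨Complex.I, by simp, rfl⟩
  have hmemV : (C₁ ∩ V).Nonempty := by
    refine ⟨Quot.mk relEx2₁ ((-Complex.I : ℂ) : OnePoint ℂ), ?_, ⟨-Complex.I, by simp, rfl⟩⟩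
    rw [hC₁]; exact ⟨-Complex.I, by simp, rfl⟩
  obtain ⟨x, -, hxU, hxV⟩ := hC₁pc U V hUopen hVopen hcover hmemU hmemV
  obtain ⟨z, hz, rfl⟩ := hxU
  obtain ⟨w, hw, hwz⟩ := hxV
  exact absurd (sign₁' hwz hw) (not_lt.mpr (le_of_lt hz))
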